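/- Let n ≥ 1, α = π/(2n+1), and U = {k ∈ ℕ : 1 ≤ k ≤ n and gcd(k, 2n+1) = 1}. Let c : U → ℂ be any function with |c(k)| ≤ 1 for all k ∈ U and c(1) = 1. Then ∑_{k ∈ U} c(k)/sin²(kα) ≠ 0. -/

import Mathlib

open Real Finset

/-- From `x < tan x`: `1/sin²x ≤ 1/x² + 1` on `(0, π/2)`. -/
lemma aux_inv_sin_sq_le {x : ℝ} (h1 : 0 < x) (h2 : x < π / 2) :
    1 / Real.sin x ^ 2 ≤ 1 / x ^ 2 + 1 := by
  have hs : 0 < Real.sin x := Real.sin_pos_of_pos_of_lt_pi h1 (h2.trans (by linarith [Real.pi_pos]))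
  have hcos : 0 < Real.cos x := Real.cos_pos_of_mem_Ioo ⟨by linarith [Real.pi_pos], h2⟩
  have ht : x < Real.tan x := Real.lt_tan h1 h2
  rw [Real.tan_eq_sin_div_cos, lt_div_iff₀ hcos] at ht
  have hsq : x ^ 2 * Real.cos x ^ 2 ≤ Real.sin x ^ 2 := by
    nlinarith [mul_pos h1 hcos, mul_pos (sub_pos.2 ht) (by positivity : (0:ℝ) < Real.sin x + x * Real.cos x)]
  have hkey : x ^ 2 ≤ Real.sin x ^ 2 * (1 + x ^ 2) := by
    nlinarith [Real.sin_sq_add_cos_sq x]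
  have h3 : 1 / Real.sin x ^ 2 ≤ (1 + x ^ 2) / x ^ 2 := by
    rw [div_le_div_iff₀ (by positivity) (by positivity)]
    linarith
  calc 1 / Real.sin x ^ 2 ≤ (1 + x ^ 2) / x ^ 2 := h3
    _ = 1 / x ^ 2 + 1 := by field_simp

/-- Telescoping bound: `∑_{k=2}^n 1/k² ≤ 2/3 − 2/(2n+1)` for `n ≥ 1`. -/
lemma aux_sum_sq_le : ∀ n : ℕ, 1 ≤ n →
    ∑ k ∈ Finset.Icc 2 n, (1 / (k : ℝ) ^ 2) ≤ 2 / 3 - 2 / (2 * (n : ℝ) + 1) := by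
  intro n hn
  induction n, hn using Nat.le_induction with
  | base => norm_num
  | succ m hm ih =>
    rw [Finset.sum_Icc_succ_top (by omega)]
    have hm0 : (1:ℝ) ≤ (m:ℝ) := by exact_mod_cast hm
    have h1 : (1 : ℝ) / ((m : ℝ) + 1) ^ 2 ≤ 2 / (2 * (m:ℝ) + 1) - 2 / (2 * ((m:ℝ) + 1) + 1) := by
      rw [div_sub_div _ _ (by positivity) (by positivity),
        div_le_div_iff₀ (by positivity) (by positivity)]
      nlinarith
    push_cast
    linarith
/-- The key nonvanishing step in the proof of Theorem 6.4: for `α = π/(2n+1)` and any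
complex coefficients `c k` of absolute value at most `1` with `c 1 = 1`, the sum
`∑_{k ∈ U} c(k)/sin²(kα)` over `U = {k : 1 ≤ k ≤ n, gcd(k, 2n+1) = 1}` is nonzero. -/
theorem character_sum_nonzero (n : ℕ) (hn : 1 ≤ n) (c : ℕ → ℂ)
    (hc : ∀ k ∈ (Finset.Icc 1 n).filter (fun k => Nat.Coprime k (2 * n + 1)),
      ‖c k‖ ≤ 1)
    (hc1 : c 1 = 1) :
    ∑ k ∈ (Finset.Icc 1 n).filter (fun k => Nat.Coprime k (2 * n + 1)),
        c k / ((Real.sin (k * (π / (2 * n + 1))) : ℂ)) ^ 2 ≠ 0 := by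
  intro h0
  have hπ : 0 < π := Real.pi_pos
  have hn1 : (1:ℝ) ≤ (n:ℝ) := by exact_mod_cast hn
  have hN0 : (0:ℝ) < 2 * (n:ℝ) + 1 := by positivity
  set A : ℝ := π / (2 * (n:ℝ) + 1) with hA
  have hA0 : 0 < A := by positivity
  set U := (Finset.Icc 1 n).filter (fun k => Nat.Coprime k (2 * n + 1)) with hU
  set f : ℕ → ℂ := fun k => c k / ((Real.sin (k * (π / (2 * n + 1))) : ℂ)) ^ 2 with hf
  have h1U : 1 ∈ U := by
    simp [hU, Finset.mem_filter, Finset.mem_Icc, hn, Nat.coprime_one_left]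
  -- angle bounds
  have hangle : ∀ k : ℕ, k ∈ Finset.Icc 1 n → 0 < (k:ℝ) * A ∧ (k:ℝ) * A < π / 2 := by
    intro k hk
    rw [Finset.mem_Icc] at hk
    have hk1 : (1:ℝ) ≤ (k:ℝ) := by exact_mod_cast hk.1
    have hkn : (k:ℝ) ≤ (n:ℝ) := by exact_mod_cast hk.2
    refine ⟨by positivity, ?_⟩
    have hkπ : (k:ℝ) * A = (k:ℝ) * π / (2 * (n:ℝ) + 1) := by rw [hA]; ring
    rw [hkπ, div_lt_div_iff₀ hN0 two_pos]
    nlinarith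
  -- sin positivity
  have hsin : ∀ k : ℕ, k ∈ Finset.Icc 1 n → 0 < Real.sin ((k:ℝ) * A) := by
    intro k hk
    obtain ⟨h1, h2⟩ := hangle k hk
    exact Real.sin_pos_of_pos_of_lt_pi h1 (by linarith)
  -- |f k| ≤ 1 / sin(kA)^2 on U
  have habs : ∀ k ∈ U, ‖f k‖ ≤ 1 / Real.sin ((k:ℝ) * A) ^ 2 := by
    intro k hk
    have hkI : k ∈ Finset.Icc 1 n := Finset.mem_filter.1 hk |>.1
    have hs := hsin k hkI
    rw [hf]
    simp only [norm_div, norm_pow, Complex.norm_real, Real.norm_eq_abs]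
    have h1 : |Real.sin ((k:ℝ) * (π / (2 * (n:ℝ) + 1)))| = Real.sin ((k:ℝ)*A) := by
      rw [← hA, abs_of_pos hs]
    rw [div_le_div_iff₀ (by push_cast; rw [h1]; positivity) (by positivity)]
    push_cast
    rw [h1]
    nlinarith [hc k hk, sq_nonneg (Real.sin ((k:ℝ)*A))]
  -- value at 1
  have hf1 : ‖f 1‖ = 1 / Real.sin A ^ 2 := by
    rw [hf]
    simp only [hc1, norm_div, norm_pow, Complex.norm_real, Real.norm_eq_abs, norm_one]
    have hs := hsin 1 (by simp [hn])
    simp only [Nat.cast_one, one_mul] at hs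
    push_cast
    rw [one_mul, ← hA, abs_of_pos hs]
  -- split off k = 1
  have hsplit : f 1 = -∑ k ∈ U.erase 1, f k := by
    have := Finset.add_sum_erase U f h1U
    rw [h0] at this
    linear_combination this
  -- bound tail
  have htail : ‖f 1‖ ≤ ∑ k ∈ Finset.Icc 2 n, (1 / Real.sin ((k:ℝ) * A) ^ 2) := by
    rw [hsplit, norm_neg]
    calc ‖∑ k ∈ U.erase 1, f k‖ ≤ ∑ k ∈ U.erase 1, ‖f k‖ :=
          norm_sum_le _ _
      _ ≤ ∑ k ∈ U.erase 1, (1 / Real.sin ((k:ℝ) * A) ^ 2) := by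
          apply Finset.sum_le_sum
          intro k hk
          exact habs k (Finset.mem_of_mem_erase hk)
      _ ≤ ∑ k ∈ Finset.Icc 2 n, (1 / Real.sin ((k:ℝ) * A) ^ 2) := by
          apply Finset.sum_le_sum_of_subset_of_nonneg
          · intro k hk
            have h1 := Finset.ne_of_mem_erase hk
            have h2 := Finset.mem_filter.1 (Finset.mem_of_mem_erase hk) |>.1
            rw [Finset.mem_Icc] at h2 ⊢
            omega
          · intro k hk _
            have := hsin k (by rw [Finset.mem_Icc] at hk ⊢; omega)
            positivity
  -- pointwise bound on tail terms and sum
  have htail2 : ∑ k ∈ Finset.Icc 2 n, (1 / Real.sin ((k:ℝ) * A) ^ 2)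
      ≤ (1/A^2) * (2/3 - 2/(2*(n:ℝ)+1)) + ((n:ℝ) - 1) := by
    calc ∑ k ∈ Finset.Icc 2 n, (1 / Real.sin ((k:ℝ) * A) ^ 2)
        ≤ ∑ k ∈ Finset.Icc 2 n, ((1/A^2) * (1 / (k:ℝ)^2) + 1) := by
          apply Finset.sum_le_sum
          intro k hk
          have hkI : k ∈ Finset.Icc 1 n := by rw [Finset.mem_Icc] at hk ⊢; omega
          obtain ⟨ha1, ha2⟩ := hangle k hkI
          have hk0 : (0:ℝ) < (k:ℝ) := by
            rw [Finset.mem_Icc] at hk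
            exact_mod_cast Nat.lt_of_lt_of_le Nat.zero_lt_two hk.1
          have hb := aux_inv_sin_sq_le ha1 ha2
          have heq : 1 / ((k:ℝ) * A)^2 = (1/A^2) * (1/(k:ℝ)^2) := by
            field_simp
          rw [heq] at hb
          exact hb
      _ = (1/A^2) * (∑ k ∈ Finset.Icc 2 n, (1 / (k:ℝ)^2)) + ((n:ℝ) - 1) := by
          rw [Finset.sum_add_distrib, Finset.mul_sum, Finset.sum_const, Nat.card_Icc,
            nsmul_eq_mul, mul_one]
          congr 1
          rw [Nat.cast_sub (by omega : 2 ≤ n + 1)]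
          push_cast
          ring
      _ ≤ (1/A^2) * (2/3 - 2/(2*(n:ℝ)+1)) + ((n:ℝ) - 1) := by
          have hA2 : (0:ℝ) ≤ 1/A^2 := by positivity
          have hb := aux_sum_sq_le n hn
          nlinarith [mul_le_mul_of_nonneg_left hb hA2]
  -- lower bound on main term
  have hmain : 1/A^2 ≤ ‖f 1‖ := by
    rw [hf1]
    have hs := hsin 1 (by simp [hn])
    have hsA : Real.sin A ≤ A := le_of_lt (Real.sin_lt hA0)
    simp only [Nat.cast_one, one_mul] at hs
    rw [div_le_div_iff₀ (by positivity) (by positivity)]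
    nlinarith
  -- final contradiction
  have hπ2 : π^2 < 9.9225 := by nlinarith [Real.pi_lt_d2]
  have key : (2*(n:ℝ)+1)^2*(2/3-2/(2*(n:ℝ)+1)) + ((n:ℝ)-1)*π^2 < (2*(n:ℝ)+1)^2 := by
    have h2 : (2*(n:ℝ)+1)^2*(2/3-2/(2*(n:ℝ)+1)) = 2/3*(2*(n:ℝ)+1)^2 - 2*(2*(n:ℝ)+1) := by
      field_simp
    nlinarith [sq_nonneg ((n:ℝ)-2),
      mul_le_mul_of_nonneg_left hπ2.le (by linarith : (0:ℝ) ≤ (n:ℝ)-1)]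
  have hfinal : (1/A^2) * (2/3 - 2/(2*(n:ℝ)+1)) + ((n:ℝ) - 1) < 1/A^2 := by
    have h1 : 1/A^2 = (2*(n:ℝ)+1)^2/π^2 := by rw [hA]; field_simp
    rw [h1, div_mul_eq_mul_div, div_add' _ _ _ (by positivity),
      div_lt_div_iff₀ (by positivity) (by positivity)]
    nlinarith [mul_lt_mul_of_pos_right key (by positivity : (0:ℝ) < π^2)]
  have := le_trans hmain (le_trans htail htail2)
  linarith
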